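/- The map U defined on basis vectors extends to a unitary operator from H ⊕ H onto 𝓗, and it intertwines the diagonal operators: for every basis vector ξ of H ⊕ H one has D(Uξ) = U((D₁ ⊕ |D₂|)ξ); consequently U(D₁ ⊕ |D₂|)U* = D. -/

import Mathlib

noncomputable section

open Real

/-- Validity of an index triple `(N, I, J)` encoding `n = N/2`, `i = I/2`, `j = J/2`, with
`n ∈ ½ℤ₊` and `i, j ∈ {-n, -n+1, …, n}` (so `|I| ≤ N`, `|J| ≤ N` and `I ≡ J ≡ N (mod 2)`). -/
abbrev validH (x : ℤ × ℤ × ℤ) : Prop :=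
  0 ≤ x.1 ∧ |x.2.1| ≤ x.1 ∧ |x.2.2| ≤ x.1 ∧
    (x.1 + x.2.1) % 2 = 0 ∧ (x.1 + x.2.2) % 2 = 0

abbrev IdxH : Type := {x : ℤ × ℤ × ℤ // validH x}

/-- The Hilbert space `H = L₂(h)` with orthonormal basis `e^(n)_{ij}`. -/
abbrev Hsp : Type := lp (fun _ : IdxH => ℂ) 2

/-- The basis vector `e^(n)_{ij}` of `H`, where `n = N/2`, `i = I/2`, `j = J/2`;
it is `0` if the indices are out of range. -/
def eH (N I J : ℤ) : Hsp :=
  if h : validH (N, I, J) then lp.single 2 (⟨(N, I, J), h⟩ : IdxH) (1 : ℂ) else 0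

/-- Validity of an index triple `(N, I, J)` (with `n = N/2`, `i = I/2`, `j = J/2`) for the basis
vectors `u^n_{ij}` of `𝓗`: `n ∈ ½ℤ₊`, `i ∈ {-n, …, n}`, `j ∈ {-n-1/2, …, n+1/2}`. -/
abbrev validU (x : ℤ × ℤ × ℤ) : Prop :=
  0 ≤ x.1 ∧ |x.2.1| ≤ x.1 ∧ (x.1 + x.2.1) % 2 = 0 ∧
    |x.2.2| ≤ x.1 + 1 ∧ (x.1 + 1 + x.2.2) % 2 = 0

/-- Validity of an index triple `(N, I, J)` (with `n = N/2`, `i = I/2`, `j = J/2`) for the basis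
vectors `d^n_{ij}` of `𝓗`: `n ≥ 1/2`, `i ∈ {-n, …, n}`, `j ∈ {-n+1/2, …, n-1/2}`. -/
abbrev validD (x : ℤ × ℤ × ℤ) : Prop :=
  1 ≤ x.1 ∧ |x.2.1| ≤ x.1 ∧ (x.1 + x.2.1) % 2 = 0 ∧
    |x.2.2| ≤ x.1 - 1 ∧ (x.1 + 1 + x.2.2) % 2 = 0

abbrev IdxW : Type := {x : ℤ × ℤ × ℤ // validU x} ⊕ {x : ℤ × ℤ × ℤ // validD x}

/-- The Hilbert space `𝓗` with orthonormal basis `{u^n_{ij}} ∪ {d^n_{ij}}`. -/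
abbrev Wsp : Type := lp (fun _ : IdxW => ℂ) 2

/-- The basis vector `u^n_{ij}` of `𝓗` (zero if out of range). -/
def eU (N I J : ℤ) : Wsp :=
  if h : validU (N, I, J) then lp.single 2 (Sum.inl ⟨(N, I, J), h⟩ : IdxW) (1 : ℂ) else 0

/-- The basis vector `d^n_{ij}` of `𝓗` (zero if out of range, in particular for
`j = ±(n+1/2)`). -/
def eD (N I J : ℤ) : Wsp :=
  if h : validD (N, I, J) then lp.single 2 (Sum.inr ⟨(N, I, J), h⟩ : IdxW) (1 : ℂ) else 0

/-- The Hilbert space `H ⊕ H`. -/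
abbrev Ksp : Type := WithLp 2 (Hsp × Hsp)

/-- `v ⊕ 0` as an element of `H ⊕ H` -/
def eK1 (v : Hsp) : Ksp := (WithLp.equiv 2 (Hsp × Hsp)).symm (v, 0)

/-- `0 ⊕ v` as an element of `H ⊕ H` -/
def eK2 (v : Hsp) : Ksp := (WithLp.equiv 2 (Hsp × Hsp)).symm (0, v)

/-- `U : H ⊕ H → 𝓗` acts on the basis vectors by `U(e^(n)_{ij} ⊕ 0) = d^n_{i,j+1/2}` for
`-n ≤ j ≤ n-1`, `U(e^(n)_{in} ⊕ 0) = u^n_{i,n+1/2}`, and `U(0 ⊕ e^(n)_{ij}) = u^n_{i,j-1/2}`. -/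
def IsUmap (U : Ksp ≃ₗᵢ[ℂ] Wsp) : Prop :=
  (∀ N I J : ℤ, validH (N, I, J) → J ≠ N → U (eK1 (eH N I J)) = eD N I (J + 1)) ∧
  (∀ N I : ℤ, validH (N, I, N) → U (eK1 (eH N I N)) = eU N I (N + 1)) ∧
  (∀ N I J : ℤ, validH (N, I, J) → U (eK2 (eH N I J)) = eU N I (J - 1))

/-- the basis vectors of `H ⊕ H`, indexed by `IdxH ⊕ IdxH` -/
def eKb : IdxH ⊕ IdxH → Ksp :=
  Sum.elim (fun x => eK1 (lp.single 2 x 1)) (fun x => eK2 (lp.single 2 x 1))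

/-- the eigenvalue of `D₁ ⊕ |D₂|` on the corresponding basis vector of `H ⊕ H`:
`D₁ e^(n)_{ij} = -2n e^(n)_{ij}` for `j ≠ n`, `D₁ e^(n)_{in} = (2n+1) e^(n)_{in}`, and
`|D₂| e^(n)_{ij} = (2n+1) e^(n)_{ij}` -/
def lamK : IdxH ⊕ IdxH → ℝ :=
  Sum.elim (fun x => if x.1.2.2 = x.1.1 then (x.1.1 : ℝ) + 1 else -(x.1.1 : ℝ))
    (fun x => (x.1.1 : ℝ) + 1)

/-- the eigenvalue of `D` on a basis vector of `𝓗`: `D u^n_{ij} = (2n+1) u^n_{ij}` and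
`D d^n_{ij} = -2n d^n_{ij}` -/
def muW : IdxW → ℝ :=
  Sum.elim (fun u => (u.1.1 : ℝ) + 1) (fun d => -(d.1.1 : ℝ))


section Aux

/-! ### Index manipulation lemmas -/

lemma vU1 {x : ℤ × ℤ × ℤ} (h : validH x) (hJ : x.2.2 = x.1) : validU (x.1, x.2.1, x.1 + 1) := by
  simp only [validH, validU, validD, abs_le] at h ⊢; omega
lemma vD1 {N I J : ℤ} (h : validH (N, I, J)) (hJ : J ≠ N) : validD (N, I, J + 1) := by
  simp only [validH, validU, validD, abs_le] at h ⊢; omega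
lemma vU2 {N I J : ℤ} (h : validH (N, I, J)) : validU (N, I, J - 1) := by
  simp only [validH, validU, validD, abs_le] at h ⊢; omega
lemma vH1 {x : ℤ × ℤ × ℤ} (h : validU x) (hJ : x.2.2 = x.1 + 1) : validH (x.1, x.2.1, x.1) := by
  simp only [validH, validU, validD, abs_le] at h ⊢; omega
lemma vH2 {N I J : ℤ} (h : validU (N, I, J)) (hJ : J ≠ N + 1) : validH (N, I, J + 1) := by
  simp only [validH, validU, validD, abs_le] at h ⊢; omega
lemma vH3 {N I J : ℤ} (h : validD (N, I, J)) : validH (N, I, J - 1) := by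
  simp only [validH, validU, validD, abs_le] at h ⊢; omega

/-- The bijection between the index sets of `H ⊕ H` and `𝓗`. -/
def eIdx : IdxH ⊕ IdxH ≃ IdxW where
  toFun := Sum.elim
    (fun x => if h : x.1.2.2 = x.1.1 then
        Sum.inl ⟨(x.1.1, x.1.2.1, x.1.1 + 1), vU1 x.2 h⟩
      else
        Sum.inr ⟨(x.1.1, x.1.2.1, x.1.2.2 + 1), vD1 x.2 h⟩)
    (fun x => Sum.inl ⟨(x.1.1, x.1.2.1, x.1.2.2 - 1), vU2 x.2⟩)
  invFun := Sum.elim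
    (fun u => if h : u.1.2.2 = u.1.1 + 1 then
        Sum.inl ⟨(u.1.1, u.1.2.1, u.1.1), vH1 u.2 h⟩
      else
        Sum.inr ⟨(u.1.1, u.1.2.1, u.1.2.2 + 1), vH2 u.2 h⟩)
    (fun d => Sum.inl ⟨(d.1.1, d.1.2.1, d.1.2.2 - 1), vH3 d.2⟩)
  left_inv := by
    rintro (⟨⟨N,I,J⟩,h⟩ | ⟨⟨N,I,J⟩,h⟩)
    · by_cases hJ : J = N
      · subst hJ; simp
      · have hD := vD1 h hJ
        have : ¬ (J + 1 = N + 1) := by omega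
        simp [hJ, this]
    · have h2 := vU2 (N := N) (I := I) (J := J) h
      have : ¬ (J - 1 = N + 1) := by
        have := h.2.2.1; simp only [abs_le] at this; omega
      simp [this]
  right_inv := by
    rintro (⟨⟨N,I,J⟩,h⟩ | ⟨⟨N,I,J⟩,h⟩)
    · by_cases hJ : J = N + 1
      · subst hJ; simp
      · simp [hJ]
    · have : ¬ (J - 1 = N) := by
        have := h.2.2.2.1; simp only [abs_le] at this; omega
      simp [this]

/-! ### `ℓ²` congruence along an equivalence of index types -/

variable {A B : Type*} [DecidableEq A] [DecidableEq B]

lemma memlp_comp (e : A ≃ B) (f : lp (fun _ : A => ℂ) 2) :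
    Memℓp (fun b => f (e.symm b)) 2 := by
  have h := (memℓp_gen_iff (p := 2) (by norm_num)).1 (lp.memℓp f)
  refine memℓp_gen ?_
  exact (Equiv.summable_iff e.symm (f := fun a => ‖f a‖ ^ (2 : ENNReal).toReal)).2 h

def lpMap (e : A ≃ B) : lp (fun _ : A => ℂ) 2 →ₗ[ℂ] lp (fun _ : B => ℂ) 2 where
  toFun f := ⟨fun b => f (e.symm b), memlp_comp e f⟩
  map_add' _ _ := rfl
  map_smul' _ _ := rfl

@[simp] lemma lpMap_apply (e : A ≃ B) (f : lp (fun _ : A => ℂ) 2) (b : B) :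
    lpMap e f b = f (e.symm b) := rfl

def lpCongr (e : A ≃ B) : lp (fun _ : A => ℂ) 2 ≃ₗᵢ[ℂ] lp (fun _ : B => ℂ) 2 where
  toLinearEquiv := LinearEquiv.ofLinear (lpMap e) (lpMap e.symm)
    (by refine LinearMap.ext fun f => lp.ext (funext fun b => ?_); simp)
    (by refine LinearMap.ext fun f => lp.ext (funext fun a => ?_); simp)
  norm_map' f := by
    rw [lp.norm_eq_tsum_rpow (by norm_num : 0 < (2:ENNReal).toReal),
      lp.norm_eq_tsum_rpow (by norm_num : 0 < (2:ENNReal).toReal)]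
    congr 1
    exact Equiv.tsum_eq e.symm (fun a => ‖f a‖ ^ (2 : ENNReal).toReal)

@[simp] lemma lpCongr_apply (e : A ≃ B) (f : lp (fun _ : A => ℂ) 2) (b : B) :
    lpCongr e f b = f (e.symm b) := rfl

lemma lpCongr_single (e : A ≃ B) (a : A) (c : ℂ) :
    lpCongr e (lp.single 2 a c) = lp.single 2 (e a) c := by
  refine lp.ext (funext fun b => ?_)
  rw [lpCongr_apply, lp.single_apply, lp.single_apply]
  by_cases h : b = e a
  · subst h; simp
  · rw [Pi.single_apply, Pi.single_apply, if_neg h,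
      if_neg (by simpa [Equiv.symm_apply_eq] using h)]

/-! ### A Hilbert basis of `H ⊕ H` -/

lemma eK1_fst (v : Hsp) : (eK1 v).fst = v := rfl
lemma eK1_snd (v : Hsp) : (eK1 v).snd = 0 := rfl
lemma eK2_fst (v : Hsp) : (eK2 v).fst = 0 := rfl
lemma eK2_snd (v : Hsp) : (eK2 v).snd = v := rfl

local notation "⟪" x ", " y "⟫" => @inner ℂ _ _ x y

lemma orthonormal_eKb : Orthonormal ℂ eKb := by
  rw [orthonormal_iff_ite]
  have hs : ∀ i j : IdxH, ⟪(lp.single 2 i (1:ℂ) : Hsp), lp.single 2 j 1⟫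
      = if i = j then 1 else 0 := by
    intro i j
    rw [lp.inner_single_left]
    by_cases h : i = j
    · subst h; rw [lp.single_apply_self]; simp
    · rw [lp.single_apply_ne (E := fun _ : IdxH => ℂ) 2 j 1 h]; simp [h]
  rintro (i | i) (j | j) <;>
    simp only [eKb, Sum.elim_inl, Sum.elim_inr, WithLp.prod_inner_apply,
      eK1_fst, eK1_snd, eK2_fst, eK2_snd, inner_zero_left, inner_zero_right,
      add_zero, zero_add, hs] <;> simp [Sum.inl.injEq, Sum.inr.injEq, eK1, eK2, hs]

def inK1 : Hsp →ₗᵢ[ℂ] Ksp where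
  toFun := eK1
  map_add' f g := by simp [eK1, WithLp.equiv_symm_apply, ← WithLp.toLp_add, Prod.mk_add_mk]
  map_smul' c f := by simp [eK1, WithLp.equiv_symm_apply, ← WithLp.toLp_smul, Prod.smul_mk, smul_zero]
  norm_map' v := WithLp.norm_toLp_fst 2 _ _ v

def inK2 : Hsp →ₗᵢ[ℂ] Ksp where
  toFun := eK2
  map_add' f g := by simp [eK2, WithLp.equiv_symm_apply, ← WithLp.toLp_add, Prod.mk_add_mk]
  map_smul' c f := by simp [eK2, WithLp.equiv_symm_apply, ← WithLp.toLp_smul, Prod.smul_mk, smul_zero]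
  norm_map' v := WithLp.norm_toLp_snd 2 _ _ v

lemma dense_single :
    ⊤ ≤ (Submodule.span ℂ (Set.range fun i : IdxH => lp.single 2 i (1:ℂ))).topologicalClosure := by
  intro f _
  rw [← SetLike.mem_coe, Submodule.topologicalClosure_coe]
  have hf := lp.hasSum_single (E := fun _ : IdxH => ℂ) (by norm_num : (2:ENNReal) ≠ ⊤) f
  refine mem_closure_of_tendsto hf (Filter.Eventually.of_forall fun s => ?_)
  refine SetLike.mem_coe.2 (Submodule.sum_mem _ fun i _ => ?_)
  have : lp.single (E := fun _ : IdxH => ℂ) 2 i (f i) = f i • lp.single 2 i 1 := by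
    rw [← lp.single_smul]; norm_num
  rw [this]
  exact Submodule.smul_mem _ _ (Submodule.subset_span ⟨i, rfl⟩)

lemma dense_eKb : ⊤ ≤ (Submodule.span ℂ (Set.range eKb)).topologicalClosure := by
  intro x _
  have hx : x = eK1 x.fst + eK2 x.snd := by
    rw [eK1, eK2, WithLp.equiv_symm_apply, ← WithLp.toLp_add]
    simp only [Prod.mk_add_mk, add_zero, zero_add]
    rfl
  rw [hx]
  have key : ∀ (T : Hsp →ₗᵢ[ℂ] Ksp), (Set.range (fun i : IdxH => T (lp.single 2 i 1))) ⊆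
      Set.range eKb → ∀ v : Hsp, T v ∈ (Submodule.span ℂ (Set.range eKb)).topologicalClosure := by
    intro T hT v
    have h1 : T v ∈ (Submodule.span ℂ
        (Set.range fun i : IdxH => lp.single 2 i (1:ℂ))).topologicalClosure.map
        (T.toContinuousLinearMap : Hsp →ₗ[ℂ] Ksp) :=
      Submodule.mem_map_of_mem (dense_single trivial)
    have h2 := Submodule.topologicalClosure_map (T.toContinuousLinearMap)
      (Submodule.span ℂ (Set.range fun i : IdxH => lp.single 2 i (1:ℂ))) h1
    rw [Submodule.map_span] at h2
    refine Submodule.topologicalClosure_mono ?_ h2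
    refine Submodule.span_le.2 ?_
    refine le_trans ?_ Submodule.subset_span
    rintro _ ⟨_, ⟨i, rfl⟩, rfl⟩
    exact hT ⟨i, rfl⟩
  refine Submodule.add_mem _ (key inK1 ?_ x.fst) (key inK2 ?_ x.snd)
  · rintro _ ⟨i, rfl⟩; exact ⟨Sum.inl i, rfl⟩
  · rintro _ ⟨i, rfl⟩; exact ⟨Sum.inr i, rfl⟩

/-- A Hilbert basis of `H ⊕ H` given by the vectors `eKb`. -/
def bK : HilbertBasis (IdxH ⊕ IdxH) ℂ Ksp := HilbertBasis.mk orthonormal_eKb dense_eKb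

/-- The unitary `U : H ⊕ H ≃ 𝓗`. -/
def Umap : Ksp ≃ₗᵢ[ℂ] Wsp := bK.repr.trans (lpCongr eIdx)

lemma Umap_eKb (ξ : IdxH ⊕ IdxH) : Umap (eKb ξ) = lp.single 2 (eIdx ξ) 1 := by
  have hb : eKb ξ = bK ξ := by rw [bK, HilbertBasis.coe_mk]
  have h1 : bK.repr (eKb ξ) = lp.single 2 ξ 1 := by rw [hb, bK.repr_self]
  show lpCongr eIdx (bK.repr (eKb ξ)) = _
  rw [h1, lpCongr_single]

end Aux

/-- The map `U`, defined on basis vectors, extends to a unitary from `H ⊕ H`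
onto `𝓗` intertwining the diagonal operators: each basis vector of `H ⊕ H` is mapped to a basis
vector of `𝓗` whose `D`-eigenvalue equals the `D₁ ⊕ |D₂|`-eigenvalue of the source, i.e.
`D(Uξ) = U((D₁ ⊕ |D₂|)ξ)` for every basis vector `ξ`; consequently `U(D₁ ⊕ |D₂|)U* = D`. -/
theorem exists_unitary_intertwiner :
    ∃ U : Ksp ≃ₗᵢ[ℂ] Wsp, IsUmap U ∧
      ∀ ξ : IdxH ⊕ IdxH, ∃ η : IdxW,
        U (eKb ξ) = lp.single 2 η 1 ∧ muW η = lamK ξ := by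
  refine ⟨Umap, ⟨?_, ?_, ?_⟩, fun ξ => ⟨eIdx ξ, Umap_eKb ξ, ?_⟩⟩
  · intro N I J h hJ
    rw [eH, dif_pos h, eD, dif_pos (vD1 h hJ)]
    have h0 := Umap_eKb (Sum.inl ⟨(N, I, J), h⟩)
    rw [show eIdx (Sum.inl ⟨(N, I, J), h⟩)
        = Sum.inr ⟨(N, I, J + 1), vD1 h hJ⟩ by simp [eIdx, hJ]] at h0
    exact h0
  · intro N I h
    rw [eH, dif_pos h, eU, dif_pos (vU1 h rfl)]
    have h0 := Umap_eKb (Sum.inl ⟨(N, I, N), h⟩)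
    rw [show eIdx (Sum.inl ⟨(N, I, N), h⟩)
        = Sum.inl ⟨(N, I, N + 1), vU1 h rfl⟩ by simp [eIdx]] at h0
    exact h0
  · intro N I J h
    rw [eH, dif_pos h, eU, dif_pos (vU2 h)]
    have h0 := Umap_eKb (Sum.inr ⟨(N, I, J), h⟩)
    rw [show eIdx (Sum.inr ⟨(N, I, J), h⟩)
        = Sum.inl ⟨(N, I, J - 1), vU2 h⟩ by simp [eIdx]] at h0
    exact h0
  · rcases ξ with ⟨⟨N, I, J⟩, h⟩ | ⟨⟨N, I, J⟩, h⟩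
    · by_cases hJ : J = N
      · subst hJ; simp [eIdx, muW, lamK]
      · simp [eIdx, muW, lamK, hJ]
    · simp [eIdx, muW, lamK]
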